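/- For any graph G on n vertices, p(G;i) ≤ p(G;i+1) for all integers i with 1 ≤ i < n/2, where p(G;i) is the number of power dominating sets of G of size i. -/

import Mathlib

open Finset Polynomial

/-- A set `T` is closed under the zero forcing rule: whenever `v ∈ T` has exactly one
neighbor outside `T`, that neighbor is in `T`. -/
def SimpleGraph.ForceClosed {V : Type*} (G : SimpleGraph V) (T : Set V) : Prop :=
  ∀ v ∈ T, ∀ w : V, G.neighborSet v \ T = {w} → w ∈ T

/-- `S` is a zero forcing set: starting from `S` and applying the forcing rule repeatedly
colors every vertex, i.e. every force-closed superset of `S` is everything. -/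
def SimpleGraph.IsZeroForcingSet {V : Type*} (G : SimpleGraph V) (S : Set V) : Prop :=
  ∀ T : Set V, S ⊆ T → G.ForceClosed T → T = Set.univ

/-- The closed neighborhood `N[S]` of a set of vertices. -/
def SimpleGraph.closedNbhd {V : Type*} (G : SimpleGraph V) (S : Set V) : Set V :=
  S ∪ {v | ∃ u ∈ S, G.Adj u v}

/-- `S` is a power dominating set: first color `N[S]` (domination step), then the
forcing process colors every vertex. -/
def SimpleGraph.IsPowerDomSet {V : Type*} (G : SimpleGraph V) (S : Set V) : Prop :=
  G.IsZeroForcingSet (G.closedNbhd S)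

/-- `S` is a dominating set. -/
def SimpleGraph.IsDomSet {V : Type*} (G : SimpleGraph V) (S : Set V) : Prop :=
  G.closedNbhd S = Set.univ

/-- `p(G;i)`: the number of power dominating sets of `G` of cardinality `i`. -/
noncomputable def pdCount {V : Type*} [Fintype V] (G : SimpleGraph V) (i : ℕ) : ℕ :=
  Nat.card {S : Finset V // G.IsPowerDomSet ↑S ∧ S.card = i}

/-- The power domination polynomial `𝒫(G;x) = ∑_{i=1}^n p(G;i) xⁱ`. -/
noncomputable def pdPoly {V : Type*} [Fintype V] (G : SimpleGraph V) : Polynomial ℤ :=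
  ∑ i ∈ Finset.Icc 1 (Fintype.card V), Polynomial.C (pdCount G i : ℤ) * Polynomial.X ^ i

private lemma pds_superset {V : Type*} (G : SimpleGraph V) {S T : Set V}
    (h : G.IsPowerDomSet S) (hST : S ⊆ T) : G.IsPowerDomSet T := by
  intro U hU hc
  refine h U (fun x hx => hU ?_) hc
  rcases hx with hx | ⟨u, hu, hadj⟩
  · exact Or.inl (hST hx)
  · exact Or.inr ⟨u, hST hu, hadj⟩

theorem stmt2 {V : Type*} [Fintype V] (G : SimpleGraph V) (i : ℕ)
    (hi1 : 1 ≤ i) (hi2 : 2 * i < Fintype.card V) :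
    pdCount G i ≤ pdCount G (i + 1) := by
  classical
  set n := Fintype.card V with hn
  set A := Finset.univ.filter
      (fun S : Finset V => G.IsPowerDomSet ↑S ∧ S.card = i) with hA
  set B := Finset.univ.filter
      (fun S : Finset V => G.IsPowerDomSet ↑S ∧ S.card = i + 1) with hB
  have key : A.card * (n - i) ≤ B.card * (i + 1) := by
    refine Finset.card_mul_le_card_mul (fun S S' => S ⊆ S') ?_ ?_
    · intro S hS
      simp only [hA, Finset.mem_filter] at hS
      have hinj : (Finset.univ \ S).card ≤
          (Finset.bipartiteAbove (fun S S' : Finset V => S ⊆ S') B S).card := by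
        apply Finset.card_le_card_of_injOn (fun v => insert v S)
        · intro v hv
          simp only [Finset.mem_coe, Finset.mem_sdiff] at hv
          simp only [Finset.mem_coe, Finset.bipartiteAbove, hB, Finset.mem_filter, Finset.mem_univ,
            true_and]
          refine ⟨⟨?_, ?_⟩, Finset.subset_insert _ _⟩
          · refine pds_superset G hS.2.1 ?_
            rw [Finset.coe_insert]
            exact Set.subset_insert _ _
          · rw [Finset.card_insert_of_notMem hv.2, hS.2.2]
        · intro a ha b hb hab
          simp only [Finset.mem_coe, Finset.mem_sdiff] at ha hb
          by_contra hne
          have h' : insert a S = insert b S := hab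
          have : a ∈ insert b S := h' ▸ Finset.mem_insert_self a S
          rcases Finset.mem_insert.mp this with h | h
          · exact hne h
          · exact ha.2 h
      calc n - i = (Finset.univ \ S).card := by
            rw [Finset.card_sdiff_of_subset (Finset.subset_univ S), Finset.card_univ, hS.2.2]
        _ ≤ _ := hinj
    · intro S' hS'
      simp only [hB, Finset.mem_filter] at hS'
      have h1 : Finset.bipartiteBelow (fun S S' : Finset V => S ⊆ S') A S'
          ⊆ S'.powersetCard i := by
        intro S hS
        simp only [Finset.bipartiteBelow, hA, Finset.mem_filter,
          Finset.mem_powersetCard] at hS ⊢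
        exact ⟨hS.2, hS.1.2.2⟩
      calc _ ≤ (S'.powersetCard i).card := Finset.card_le_card h1
        _ = (i + 1).choose i := by rw [Finset.card_powersetCard, hS'.2.2]
        _ = i + 1 := Nat.choose_succ_self_right i
  have hni : i + 1 ≤ n - i := by omega
  have hAc : pdCount G i = A.card := by
    rw [hA, pdCount, Nat.card_eq_fintype_card, Fintype.card_subtype]
  have hBc : pdCount G (i + 1) = B.card := by
    rw [hB, pdCount, Nat.card_eq_fintype_card, Fintype.card_subtype]
  rw [hAc, hBc]
  have h2 : A.card * (i + 1) ≤ B.card * (i + 1) :=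
    le_trans (Nat.mul_le_mul_left A.card hni) key
  simpa [Nat.mul_comm] using h2
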